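/- Let W̃(x) := 1 + (1/2)·(x₂/(1+x₁²))² + F(arctan x₁) and W(t,x) := W̃(ζ_d(t)+x). Let ψ₁, ψ₂, ψ₃, ψ₄ : [0,∞) → [0,∞) be continuous non-decreasing functions with max{ |∇g₁(ζ)| : |ζ| ≤ Λ₁+s } ≤ ψ₁(s), max{ |∇g₂(ζ)| : |ζ| ≤ Λ₁+s } ≤ ψ₂(s), max{ |∇W̃(x)| : |x| ≤ Λ₁+s } ≤ ψ₃(s), and max{ |∇²W̃(x)| : |x| ≤ Λ₁+s } ≤ ψ₄(s) for all s ≥ 0, where Λ₁ := sup_{t≥0}|ζ_d(t)|, Λ₂ := sup_{t≥−τ}|v_d(t)|, Λ₃ := sup_{t≥0}|ζ̇_d(t)|, Λ₄ := sup_{t≥−τ}|v̇_d(t)|, Λ₅ := sup_{t≥0}|ζ̈_d(t)|. Define P(s) := (2Λ₃ψ₁(s) + 2Λ₂Λ₃ψ₂(s) + (Λ₄+Λ₃)sψ₂(s))² + ψ₃(s)² + 1 + ψ₄(s(1+τL(s)))·(Λ₃ + sL(s))² + Λ₅·ψ₃(s(1+τL(s))). Then P satisfies, for all s ≥ 0: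 (i) P(s) ≥ 1 + sup{ |∂ₜₜW(t,ξ)| + 2sL(s)|∂ₜ∇ₓW(t,ξ)| + s²L(s)²|∇ₓ²W(t,ξ)| : |ξ| ≤ s(1+τL(s)), t ≥ 0 }; (ii) |∇ₓW(t,x)| ≤ √(P(|x|)) for all t ≥ 0, x ∈ ℝ²; (iii) |f(s',x,u) − f(t,x,u)| ≤ (s'−t)·√(P(|x|+|u|)) for all s' ≥ t ≥ 0, x ∈ ℝ², u ∈ ℝ. -/

import Mathlib

open Set Real Filter

/- STATEMENT 15: the explicit function P satisfies properties (3.5), (3.6), (3.7)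
   for the NMES tracking-error system. -/

noncomputable def vec2 (a b : ℝ) : EuclideanSpace ℝ (Fin 2) :=
  (WithLp.equiv 2 (Fin 2 → ℝ)).symm ![a, b]

noncomputable def g1f (F H : ℝ → ℝ) (ζ : EuclideanSpace ℝ (Fin 2)) : ℝ :=
  -(1 + (ζ 0) ^ 2) * deriv F (Real.arctan (ζ 0))
    + (2 * ζ 0 / (1 + (ζ 0) ^ 2)) * (ζ 1) ^ 2
    - (1 + (ζ 0) ^ 2) * H (ζ 1 / (1 + (ζ 0) ^ 2))

noncomputable def g2f (G : ℝ → ℝ → ℝ) (ζ : EuclideanSpace ℝ (Fin 2)) : ℝ :=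
  (1 + (ζ 0) ^ 2) * G (Real.arctan (ζ 0)) (ζ 1 / (1 + (ζ 0) ^ 2))

noncomputable def Wtilde (F : ℝ → ℝ) (x : EuclideanSpace ℝ (Fin 2)) : ℝ :=
  1 + (1 / 2) * (x 1 / (1 + (x 0) ^ 2)) ^ 2 + F (Real.arctan (x 0))


section helpers
set_option linter.unusedSectionVars false
open RealInnerProductSpace
variable {E : Type*} [NormedAddCommGroup E] [InnerProductSpace ℝ E] [CompleteSpace E]

noncomputable def tdS (E : Type*) [NormedAddCommGroup E] [InnerProductSpace ℝ E]
    [CompleteSpace E] : StrongDual ℝ E →L[ℝ] E :=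
  { toFun := fun ℓ => (InnerProductSpace.toDual ℝ E).symm ℓ,
    map_add' := by intros; simp,
    map_smul' := by intros; simp [starRingEnd_apply],
    cont := (InnerProductSpace.toDual ℝ E).symm.continuous }

lemma tdS_norm (ℓ : StrongDual ℝ E) : ‖tdS E ℓ‖ = ‖ℓ‖ :=
  (InnerProductSpace.toDual ℝ E).symm.norm_map ℓ

lemma tdS_inner (ℓ : StrongDual ℝ E) (w : E) : ⟪tdS E ℓ, w⟫ = ℓ w :=
  InnerProductSpace.toDual_symm_apply

lemma gradient_def' (f : E → ℝ) (x : E) : gradient f x = tdS E (fderiv ℝ f x) := rfl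

lemma fderiv_shift {G : Type*} [NormedAddCommGroup G] [NormedSpace ℝ G]
    (g : E → G) (c x : E) (hg : DifferentiableAt ℝ g (c + x)) :
    fderiv ℝ (fun y => g (c + y)) x = fderiv ℝ g (c + x) := by
  have h : HasFDerivAt (fun y : E => g (c + y)) (fderiv ℝ g (c + x)) x := by
    have := hg.hasFDerivAt.comp x ((hasFDerivAt_id x).const_add c)
    simpa [Function.comp_def] using this
  exact h.fderiv

lemma gradient_shift (f : E → ℝ) (c x : E) (hf : DifferentiableAt ℝ f (c + x)) :
    gradient (fun y => f (c + y)) x = gradient f (c + x) := by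
  rw [gradient_def', gradient_def', fderiv_shift _ _ _ hf]

lemma norm_gradient_eq (f : E → ℝ) (x : E) : ‖gradient f x‖ = ‖fderiv ℝ f x‖ := by
  rw [gradient_def', tdS_norm]

lemma fderiv_apply_le_grad (f : E → ℝ) (x v : E) :
    |fderiv ℝ f x v| ≤ ‖gradient f x‖ * ‖v‖ := by
  rw [norm_gradient_eq]; exact (fderiv ℝ f x).le_opNorm v

lemma hasFDerivAt_grad (f : E → ℝ) (c : E) (hf : DifferentiableAt ℝ (fderiv ℝ f) c) :
    HasFDerivAt (gradient f) ((tdS E).comp (fderiv ℝ (fderiv ℝ f) c)) c :=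
  ((tdS E).hasFDerivAt).comp c hf.hasFDerivAt

lemma diff_grad (f : E → ℝ) (c : E) (hf : DifferentiableAt ℝ (fderiv ℝ f) c) :
    DifferentiableAt ℝ (gradient f) c :=
  (hasFDerivAt_grad f c hf).differentiableAt

lemma fderiv_grad_apply (f : E → ℝ) (c v : E)
    (hf : DifferentiableAt ℝ (fderiv ℝ f) c) :
    fderiv ℝ (gradient f) c v = tdS E (fderiv ℝ (fderiv ℝ f) c v) := by
  rw [(hasFDerivAt_grad f c hf).fderiv]; rfl

lemma snd_bound (f : E → ℝ) (c v w : E) (hf : DifferentiableAt ℝ (fderiv ℝ f) c) :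
    |fderiv ℝ (fderiv ℝ f) c v w| ≤ ‖fderiv ℝ (gradient f) c‖ * ‖v‖ * ‖w‖ := by
  have h1 : fderiv ℝ (fderiv ℝ f) c v w = ⟪fderiv ℝ (gradient f) c v, w⟫ := by
    rw [fderiv_grad_apply f c v hf, tdS_inner]
  rw [h1]
  calc |⟪fderiv ℝ (gradient f) c v, w⟫| ≤ ‖fderiv ℝ (gradient f) c v‖ * ‖w‖ :=
        abs_real_inner_le_norm _ _
    _ ≤ ‖fderiv ℝ (gradient f) c‖ * ‖v‖ * ‖w‖ := by
        gcongr; exact (fderiv ℝ (gradient f) c).le_opNorm v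

end helpers

section concrete

abbrev E2 := EuclideanSpace ℝ (Fin 2)

lemma cd_proj (i : Fin 2) : ContDiff ℝ 2 (fun x : E2 => x i) :=
  by exact (EuclideanSpace.proj (𝕜 := ℝ) (ι := Fin 2) i).contDiff

lemma arctan_mem (a : ℝ) : Real.arctan a ∈ Ioo (-(π/2)) (π/2) :=
  ⟨Real.neg_pi_div_two_lt_arctan a, Real.arctan_lt_pi_div_two a⟩

lemma one_add_sq_ne (a : ℝ) : 1 + a ^ 2 ≠ 0 := by positivity

lemma contDiffAt_Wtilde {F : ℝ → ℝ} (hF : ContDiffOn ℝ 2 F (Ioo (-(π/2)) (π/2)))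
    (x : E2) : ContDiffAt ℝ 2 (Wtilde F) x := by
  have h0 := (cd_proj 0).contDiffAt (x := x)
  have h1' := (cd_proj 1).contDiffAt (x := x)
  have hden : ContDiffAt ℝ 2 (fun y : E2 => 1 + (y 0) ^ 2) x :=
    contDiffAt_const.add (h0.pow 2)
  have h1 : ContDiffAt ℝ 2 (fun y : E2 => 1 + (1/2) * (y 1 / (1 + (y 0) ^ 2)) ^ 2) x :=
    contDiffAt_const.add (contDiffAt_const.mul ((h1'.div hden (one_add_sq_ne _)).pow 2))
  have h2 : ContDiffAt ℝ 2 (fun y : E2 => F (Real.arctan (y 0))) x := by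
    have hFat : ContDiffAt ℝ 2 F (Real.arctan (x 0)) :=
      hF.contDiffAt (isOpen_Ioo.mem_nhds (arctan_mem _))
    exact hFat.comp x ((Real.contDiff_arctan.of_le le_top).contDiffAt.comp x h0)
  exact h1.add h2

lemma diff_fderiv_Wtilde {F : ℝ → ℝ} (hF : ContDiffOn ℝ 2 F (Ioo (-(π/2)) (π/2)))
    (x : E2) : DifferentiableAt ℝ (fderiv ℝ (Wtilde F)) x :=
  ((contDiffAt_Wtilde hF x).fderiv_right (m := 1) (by norm_num)).differentiableAt (by norm_num)

lemma diff_g1f {F H : ℝ → ℝ} (hF : ContDiffOn ℝ 2 F (Ioo (-(π/2)) (π/2)))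
    (hH : ContDiff ℝ 1 H) (x : E2) : DifferentiableAt ℝ (g1f F H) x := by
  have h0 : DifferentiableAt ℝ (fun y : E2 => y 0) x :=
    ((cd_proj 0).differentiable (by norm_num)).differentiableAt
  have h1 : DifferentiableAt ℝ (fun y : E2 => y 1) x :=
    ((cd_proj 1).differentiable (by norm_num)).differentiableAt
  have hden : DifferentiableAt ℝ (fun y : E2 => 1 + (y 0) ^ 2) x :=
    (differentiableAt_const _).add (h0.pow 2)
  have harc : DifferentiableAt ℝ (fun y : E2 => Real.arctan (y 0)) x :=
    (Real.differentiable_arctan _).comp x h0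
  have hdF : DifferentiableAt ℝ (fun y : E2 => deriv F (Real.arctan (y 0))) x := by
    have hd : ContDiffOn ℝ 1 (deriv F) (Ioo (-(π/2)) (π/2)) :=
      hF.deriv_of_isOpen isOpen_Ioo (by norm_num)
    exact ((hd.differentiableOn (by norm_num)).differentiableAt
      (isOpen_Ioo.mem_nhds (arctan_mem _))).comp x harc
  have hq : DifferentiableAt ℝ (fun y : E2 => y 1 / (1 + (y 0) ^ 2)) x := by
    simp only [div_eq_mul_inv]
    exact h1.mul (hden.inv (one_add_sq_ne _))
  have hHc : DifferentiableAt ℝ (fun y : E2 => H (y 1 / (1 + (y 0) ^ 2))) x :=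
    ((hH.differentiable (by norm_num)) (x 1 / (1 + (x 0) ^ 2))).comp x hq
  have hA : DifferentiableAt ℝ (fun y : E2 => -(1 + (y 0) ^ 2) * deriv F (Real.arctan (y 0))) x := by
    exact hden.neg.mul hdF
  have hB : DifferentiableAt ℝ (fun y : E2 => (2 * y 0 / (1 + (y 0) ^ 2)) * (y 1) ^ 2) x := by
    simp only [div_eq_mul_inv]
    exact (((differentiableAt_const _).mul h0).mul (hden.inv (one_add_sq_ne _))).mul (h1.pow 2)
  have hC : DifferentiableAt ℝ (fun y : E2 => (1 + (y 0) ^ 2) * H (y 1 / (1 + (y 0) ^ 2))) x := by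
    exact hden.mul hHc
  exact (hA.add hB).sub hC

lemma diff_g2f {G : ℝ → ℝ → ℝ}
    (hG : ContDiffOn ℝ 1 (fun p : ℝ × ℝ => G p.1 p.2) (Ioo (-(π/2)) (π/2) ×ˢ univ))
    (x : E2) : DifferentiableAt ℝ (g2f G) x := by
  have h0 : DifferentiableAt ℝ (fun y : E2 => y 0) x :=
    ((cd_proj 0).differentiable (by norm_num)).differentiableAt
  have h1 : DifferentiableAt ℝ (fun y : E2 => y 1) x :=
    ((cd_proj 1).differentiable (by norm_num)).differentiableAt
  have hden : DifferentiableAt ℝ (fun y : E2 => 1 + (y 0) ^ 2) x :=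
    (differentiableAt_const _).add (h0.pow 2)
  have harc : DifferentiableAt ℝ (fun y : E2 => Real.arctan (y 0)) x :=
    (Real.differentiable_arctan _).comp x h0
  have hq : DifferentiableAt ℝ (fun y : E2 => y 1 / (1 + (y 0) ^ 2)) x := by
    simp only [div_eq_mul_inv]
    exact h1.mul (hden.inv (one_add_sq_ne _))
  have hGd : DifferentiableAt ℝ (fun p : ℝ × ℝ => G p.1 p.2)
      (Real.arctan (x 0), x 1 / (1 + (x 0) ^ 2)) :=
    (hG.differentiableOn (by norm_num)).differentiableAt
      ((isOpen_Ioo.prod isOpen_univ).mem_nhds ⟨arctan_mem _, mem_univ _⟩)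
  exact hden.mul (by have := hGd.comp x (harc.prodMk hq); exact this)

lemma vec2_sub_norm (a b c : ℝ) : ‖vec2 a b - vec2 a c‖ = |b - c| := by
  have h : vec2 a b - vec2 a c = vec2 0 (b - c) := by
    ext i; fin_cases i <;> simp [vec2]
  rw [h, EuclideanSpace.norm_eq]
  have h0 : (vec2 0 (b-c)) 0 = 0 := rfl
  have h1 : (vec2 0 (b-c)) 1 = b - c := rfl
  rw [Fin.sum_univ_two, h0, h1]
  simp [Real.sqrt_sq_eq_abs]

end concrete

set_option maxHeartbeats 2000000 in
theorem stmt_15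
    (F H : ℝ → ℝ) (G : ℝ → ℝ → ℝ) (τ : ℝ) (hτ : 0 < τ)
    (hF : ContDiffOn ℝ 2 F (Ioo (-(π / 2)) (π / 2)))
    (hFnn : ∀ q ∈ Ioo (-(π / 2)) (π / 2), 0 ≤ F q)
    (hFtop₁ : Tendsto F (nhdsWithin (π / 2) (Iio (π / 2))) atTop)
    (hFtop₂ : Tendsto F (nhdsWithin (-(π / 2)) (Ioi (-(π / 2)))) atTop)
    (hH : ContDiff ℝ 1 H) (hHpos : ∀ y : ℝ, 0 ≤ y * H y)
    (hG : ContDiffOn ℝ 1 (fun p : ℝ × ℝ => G p.1 p.2) (Ioo (-(π / 2)) (π / 2) ×ˢ univ))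
    (hGpos : ∀ q ∈ Ioo (-(π / 2)) (π / 2), ∀ y : ℝ, 0 < G q y)
    (hGbdd : BddAbove {z : ℝ | ∃ q ∈ Ioo (-(π / 2)) (π / 2), ∃ y : ℝ, z = G q y})
    -- the reference signal
    (q_d qd' qd'' v_d vd' : ℝ → ℝ)
    (hqdmem : ∀ t ≥ (0:ℝ), q_d t ∈ Ioo (-(π / 2)) (π / 2))
    (hqdD : ∀ t ≥ (0:ℝ), HasDerivAt q_d (qd' t) t ∧ HasDerivAt qd' (qd'' t) t)
    (hvdD : ∀ t ≥ -τ, HasDerivAt v_d (vd' t) t) (hvdc : ContinuousOn vd' (Ici (-τ)))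
    (hrefODE : ∀ t ≥ (0:ℝ),
      qd'' t = -(deriv F (q_d t)) - H (qd' t) + G (q_d t) (qd' t) * v_d (t - τ))
    (hqdsup : ∃ b < π / 2, ∀ t ≥ (0:ℝ), |q_d t| ≤ b)
    -- ζ_d and its derivatives
    (ζd ζd' ζd'' : ℝ → EuclideanSpace ℝ (Fin 2))
    (hζd : ∀ t, ζd t = vec2 (Real.tan (q_d t)) (qd' t / Real.cos (q_d t) ^ 2))
    (hζdD : ∀ t ≥ (0:ℝ), HasDerivAt ζd (ζd' t) t ∧ HasDerivAt ζd' (ζd'' t) t)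
    -- the suprema Λ₁,…,Λ₅ (all finite)
    (Λ₁ Λ₂ Λ₃ Λ₄ Λ₅ : ℝ)
    (hb₁ : BddAbove ((fun t => ‖ζd t‖) '' Ici 0)) (hΛ₁ : Λ₁ = sSup ((fun t => ‖ζd t‖) '' Ici 0))
    (hb₂ : BddAbove ((fun t => |v_d t|) '' Ici (-τ))) (hΛ₂ : Λ₂ = sSup ((fun t => |v_d t|) '' Ici (-τ)))
    (hb₃ : BddAbove ((fun t => ‖ζd' t‖) '' Ici 0)) (hΛ₃ : Λ₃ = sSup ((fun t => ‖ζd' t‖) '' Ici 0))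
    (hb₄ : BddAbove ((fun t => |vd' t|) '' Ici (-τ))) (hΛ₄ : Λ₄ = sSup ((fun t => |vd' t|) '' Ici (-τ)))
    (hb₅ : BddAbove ((fun t => ‖ζd'' t‖) '' Ici 0)) (hΛ₅ : Λ₅ = sSup ((fun t => ‖ζd'' t‖) '' Ici 0))
    -- the bounding functions ψ₁,…,ψ₄
    (ψ₁ ψ₂ ψ₃ ψ₄ : ℝ → ℝ)
    (hψc : ∀ i ∈ [ψ₁, ψ₂, ψ₃, ψ₄], ContinuousOn i (Ici 0) ∧ MonotoneOn i (Ici 0) ∧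
      ∀ s ≥ (0:ℝ), 0 ≤ i s)
    (hψ₁ : ∀ s ≥ (0:ℝ), ∀ ζ : EuclideanSpace ℝ (Fin 2), ‖ζ‖ ≤ Λ₁ + s →
      ‖gradient (g1f F H) ζ‖ ≤ ψ₁ s)
    (hψ₂ : ∀ s ≥ (0:ℝ), ∀ ζ : EuclideanSpace ℝ (Fin 2), ‖ζ‖ ≤ Λ₁ + s →
      ‖gradient (g2f G) ζ‖ ≤ ψ₂ s)
    (hψ₃ : ∀ s ≥ (0:ℝ), ∀ x : EuclideanSpace ℝ (Fin 2), ‖x‖ ≤ Λ₁ + s →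
      ‖gradient (Wtilde F) x‖ ≤ ψ₃ s)
    (hψ₄ : ∀ s ≥ (0:ℝ), ∀ x : EuclideanSpace ℝ (Fin 2), ‖x‖ ≤ Λ₁ + s →
      ‖fderiv ℝ (gradient (Wtilde F)) x‖ ≤ ψ₄ s)
    -- f̃, g̃, f and the function L from (H1)
    (ftil gtil : ℝ → EuclideanSpace ℝ (Fin 2) → ℝ)
    (hftil : ∀ t x, ftil t x = g1f F H (ζd t + x) - g1f F H (ζd t)
      + (g2f G (ζd t + x) - g2f G (ζd t)) * v_d (t - τ))
    (hgtil : ∀ t x, gtil t x = g2f G (ζd t + x))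
    (f : ℝ → EuclideanSpace ℝ (Fin 2) → ℝ → EuclideanSpace ℝ (Fin 2))
    (hfdef : ∀ t x u, f t x u = vec2 (x 1) (ftil t x + gtil t x * u))
    (L : ℝ → ℝ) (hLc : Continuous L) (hLm : Monotone L) (hL1 : ∀ s, 1 ≤ L s)
    (hLip : ∀ t ≥ (0:ℝ), ∀ x y : EuclideanSpace ℝ (Fin 2), ∀ u : ℝ,
      ‖f t x u - f t y u‖ ≤ L (‖x‖ + ‖y‖ + |u|) * ‖x - y‖)
    (hgr : ∀ t ≥ (0:ℝ), ∀ x : EuclideanSpace ℝ (Fin 2), ∀ u : ℝ,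
      ‖f t x u‖ ≤ (‖x‖ + |u|) * L (‖x‖ + |u|))
    -- the explicit function P
    (P : ℝ → ℝ)
    (hP : ∀ s, P s = (2 * Λ₃ * ψ₁ s + 2 * Λ₂ * Λ₃ * ψ₂ s + (Λ₄ + Λ₃) * s * ψ₂ s) ^ 2
      + ψ₃ s ^ 2 + 1 + ψ₄ (s * (1 + τ * L s)) * (Λ₃ + s * L s) ^ 2
      + Λ₅ * ψ₃ (s * (1 + τ * L s))) :
    -- (i): inequality (3.5)
    (∀ s ≥ (0:ℝ), ∀ t ≥ (0:ℝ), ∀ ξ : EuclideanSpace ℝ (Fin 2), ‖ξ‖ ≤ s * (1 + τ * L s) →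
      1 + |derivWithin (fun s' => derivWithin (fun s'' => Wtilde F (ζd s'' + ξ)) (Ici 0) s') (Ici 0) t|
        + 2 * s * L s * ‖derivWithin (fun s' => gradient (fun y => Wtilde F (ζd s' + y)) ξ) (Ici 0) t‖
        + s ^ 2 * L s ^ 2 * ‖fderiv ℝ (fun y => gradient (fun y' => Wtilde F (ζd t + y')) y) ξ‖
      ≤ P s) ∧
    -- (ii): inequality (3.6)
    (∀ t ≥ (0:ℝ), ∀ x : EuclideanSpace ℝ (Fin 2),
      ‖gradient (fun y => Wtilde F (ζd t + y)) x‖ ≤ Real.sqrt (P ‖x‖)) ∧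
    -- (iii): inequality (3.7)
    (∀ t ≥ (0:ℝ), ∀ s' ≥ t, ∀ x : EuclideanSpace ℝ (Fin 2), ∀ u : ℝ,
      ‖f s' x u - f t x u‖ ≤ (s' - t) * Real.sqrt (P (‖x‖ + |u|))) := by
  
  classical
  have hψ₁nn : ∀ s ≥ (0:ℝ), 0 ≤ ψ₁ s := (hψc ψ₁ (by simp)).2.2
  have hψ₂nn : ∀ s ≥ (0:ℝ), 0 ≤ ψ₂ s := (hψc ψ₂ (by simp)).2.2
  have hψ₃nn : ∀ s ≥ (0:ℝ), 0 ≤ ψ₃ s := (hψc ψ₃ (by simp)).2.2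
  have hψ₄nn : ∀ s ≥ (0:ℝ), 0 ≤ ψ₄ s := (hψc ψ₄ (by simp)).2.2
  have hζb : ∀ r, 0 ≤ r → ‖ζd r‖ ≤ Λ₁ := fun r hr => hΛ₁ ▸ le_csSup hb₁ ⟨r, hr, rfl⟩
  have hζ'b : ∀ r, 0 ≤ r → ‖ζd' r‖ ≤ Λ₃ := fun r hr => hΛ₃ ▸ le_csSup hb₃ ⟨r, hr, rfl⟩
  have hζ''b : ∀ r, 0 ≤ r → ‖ζd'' r‖ ≤ Λ₅ := fun r hr => hΛ₅ ▸ le_csSup hb₅ ⟨r, hr, rfl⟩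
  have hvb : ∀ r, -τ ≤ r → |v_d r| ≤ Λ₂ := fun r hr => hΛ₂ ▸ le_csSup hb₂ ⟨r, hr, rfl⟩
  have hv'b : ∀ r, -τ ≤ r → |vd' r| ≤ Λ₄ := fun r hr => hΛ₄ ▸ le_csSup hb₄ ⟨r, hr, rfl⟩
  have hΛ₁0 : 0 ≤ Λ₁ := le_trans (norm_nonneg _) (hζb 0 le_rfl)
  have hΛ₂0 : 0 ≤ Λ₂ := le_trans (abs_nonneg _) (hvb (-τ) le_rfl)
  have hΛ₃0 : 0 ≤ Λ₃ := le_trans (norm_nonneg _) (hζ'b 0 le_rfl)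
  have hΛ₄0 : 0 ≤ Λ₄ := le_trans (abs_nonneg _) (hv'b (-τ) le_rfl)
  have hΛ₅0 : 0 ≤ Λ₅ := le_trans (norm_nonneg _) (hζ''b 0 le_rfl)
  have hWd : ∀ y, DifferentiableAt ℝ (Wtilde F) y :=
    fun y => (contDiffAt_Wtilde hF y).differentiableAt (by norm_num)
  have hWd2 : ∀ y, DifferentiableAt ℝ (fderiv ℝ (Wtilde F)) y := diff_fderiv_Wtilde hF
  have hg1d : ∀ y, DifferentiableAt ℝ (g1f F H) y := diff_g1f hF hH
  have hg2d : ∀ y, DifferentiableAt ℝ (g2f G) y := diff_g2f hG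
  have hLpos : ∀ s : ℝ, (0:ℝ) < L s := fun s => lt_of_lt_of_le one_pos (hL1 s)
  have hAs : ∀ s : ℝ, 0 ≤ s → 0 ≤ s * (1 + τ * L s) :=
    fun s hs => mul_nonneg hs (by nlinarith [hL1 s, hτ.le])
  have hBr : ∀ s : ℝ, 0 ≤ s →
      0 ≤ 2 * Λ₃ * ψ₁ s + 2 * Λ₂ * Λ₃ * ψ₂ s + (Λ₄ + Λ₃) * s * ψ₂ s := by
    intro s hs
    have h1 := hψ₁nn s hs; have h2 := hψ₂nn s hs
    have e1 : 0 ≤ 2 * Λ₃ * ψ₁ s := mul_nonneg (by linarith) h1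
    have e2 : 0 ≤ 2 * Λ₂ * Λ₃ * ψ₂ s := mul_nonneg (by nlinarith) h2
    have e3 : 0 ≤ (Λ₄ + Λ₃) * s * ψ₂ s :=
      mul_nonneg (mul_nonneg (by linarith) hs) h2
    linarith
  have hPsq : ∀ s : ℝ, 0 ≤ s →
      (2 * Λ₃ * ψ₁ s + 2 * Λ₂ * Λ₃ * ψ₂ s + (Λ₄ + Λ₃) * s * ψ₂ s) ^ 2 ≤ P s ∧
      ψ₃ s ^ 2 ≤ P s := by
    intro s hs
    have h4 := hψ₄nn _ (hAs s hs)
    have h3 := hψ₃nn _ (hAs s hs)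
    have e1 : 0 ≤ ψ₄ (s * (1 + τ * L s)) * (Λ₃ + s * L s) ^ 2 :=
      mul_nonneg h4 (sq_nonneg _)
    have e2 : 0 ≤ Λ₅ * ψ₃ (s * (1 + τ * L s)) := mul_nonneg hΛ₅0 h3
    constructor
    · rw [hP]
      nlinarith [sq_nonneg (ψ₃ s)]
    · rw [hP]
      nlinarith [sq_nonneg (2 * Λ₃ * ψ₁ s + 2 * Λ₂ * Λ₃ * ψ₂ s + (Λ₄ + Λ₃) * s * ψ₂ s)]
  have hsqrtP : ∀ a s : ℝ, 0 ≤ a → a ^ 2 ≤ P s → a ≤ Real.sqrt (P s) := by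
    intro a s ha h
    calc a = Real.sqrt (a ^ 2) := (Real.sqrt_sq ha).symm
      _ ≤ Real.sqrt (P s) := Real.sqrt_le_sqrt h
  refine ⟨?_, ?_, ?_⟩
  · -- part (i)
    intro s hs t ht ξ hξ
    set A := s * (1 + τ * L s) with hAdef
    have hA0 : 0 ≤ A := hAs s hs
    have hptn : ‖ζd t + ξ‖ ≤ Λ₁ + A :=
      (norm_add_le _ _).trans (by have := hζb t ht; linarith)
    have hud : UniqueDiffOn ℝ (Ici (0:ℝ)) := uniqueDiffOn_Ici 0
    have hw : ∀ r ∈ Ici (0:ℝ), HasDerivAt (fun s'' => Wtilde F (ζd s'' + ξ))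
        (fderiv ℝ (Wtilde F) (ζd r + ξ) (ζd' r)) r := fun r hr =>
      (hWd _).hasFDerivAt.comp_hasDerivAt r (((hζdD r hr).1).add_const ξ)
    have e1 : ∀ r ∈ Ici (0:ℝ), derivWithin (fun s'' => Wtilde F (ζd s'' + ξ)) (Ici 0) r
        = fderiv ℝ (Wtilde F) (ζd r + ξ) (ζd' r) := fun r hr =>
      ((hw r hr).hasDerivWithinAt).derivWithin (hud r hr)
    have e2 : derivWithin (fun s' => derivWithin (fun s'' => Wtilde F (ζd s'' + ξ)) (Ici 0) s') (Ici 0) t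
        = derivWithin (fun r => fderiv ℝ (Wtilde F) (ζd r + ξ) (ζd' r)) (Ici 0) t :=
      derivWithin_congr (fun r hr => e1 r hr) (e1 t ht)
    have hc : HasDerivAt (fun r => fderiv ℝ (Wtilde F) (ζd r + ξ))
        (fderiv ℝ (fderiv ℝ (Wtilde F)) (ζd t + ξ) (ζd' t)) t :=
      (hWd2 _).hasFDerivAt.comp_hasDerivAt t (((hζdD t ht).1).add_const ξ)
    have hφ : HasDerivAt (fun r => fderiv ℝ (Wtilde F) (ζd r + ξ) (ζd' r))
        (fderiv ℝ (fderiv ℝ (Wtilde F)) (ζd t + ξ) (ζd' t) (ζd' t)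
          + fderiv ℝ (Wtilde F) (ζd t + ξ) (ζd'' t)) t :=
      hc.clm_apply (hζdD t ht).2
    have e3 : derivWithin (fun r => fderiv ℝ (Wtilde F) (ζd r + ξ) (ζd' r)) (Ici 0) t
        = fderiv ℝ (fderiv ℝ (Wtilde F)) (ζd t + ξ) (ζd' t) (ζd' t)
          + fderiv ℝ (Wtilde F) (ζd t + ξ) (ζd'' t) :=
      hφ.hasDerivWithinAt.derivWithin (hud t ht)
    have hψ₄app : ‖fderiv ℝ (gradient (Wtilde F)) (ζd t + ξ)‖ ≤ ψ₄ A :=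
      hψ₄ A hA0 _ hptn
    have hψ₃app : ‖gradient (Wtilde F) (ζd t + ξ)‖ ≤ ψ₃ A := hψ₃ A hA0 _ hptn
    have bV1 : |fderiv ℝ (fderiv ℝ (Wtilde F)) (ζd t + ξ) (ζd' t) (ζd' t)
        + fderiv ℝ (Wtilde F) (ζd t + ξ) (ζd'' t)| ≤ ψ₄ A * Λ₃ * Λ₃ + ψ₃ A * Λ₅ := by
      have b1 : |fderiv ℝ (fderiv ℝ (Wtilde F)) (ζd t + ξ) (ζd' t) (ζd' t)|
          ≤ ψ₄ A * Λ₃ * Λ₃ :=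
        (snd_bound (Wtilde F) _ _ _ (hWd2 _)).trans
          (mul_le_mul (mul_le_mul hψ₄app (hζ'b t ht) (norm_nonneg _) (hψ₄nn _ hA0))
            (hζ'b t ht) (norm_nonneg _) (mul_nonneg (hψ₄nn _ hA0) hΛ₃0))
      have b2 : |fderiv ℝ (Wtilde F) (ζd t + ξ) (ζd'' t)| ≤ ψ₃ A * Λ₅ :=
        (fderiv_apply_le_grad _ _ _).trans
          (mul_le_mul hψ₃app (hζ''b t ht) (norm_nonneg _) (hψ₃nn _ hA0))
      exact (abs_add_le _ _).trans (by linarith)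
    -- term 2
    have egr : (fun s' => gradient (fun y => Wtilde F (ζd s' + y)) ξ)
        = fun s' => gradient (Wtilde F) (ζd s' + ξ) :=
      funext fun r => gradient_shift _ _ _ (hWd _)
    have hgc : HasDerivAt (fun r => gradient (Wtilde F) (ζd r + ξ))
        (fderiv ℝ (gradient (Wtilde F)) (ζd t + ξ) (ζd' t)) t :=
      ((diff_grad _ _ (hWd2 _)).hasFDerivAt).comp_hasDerivAt t (((hζdD t ht).1).add_const ξ)
    have e4 : derivWithin (fun s' => gradient (Wtilde F) (ζd s' + ξ)) (Ici 0) t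
        = fderiv ℝ (gradient (Wtilde F)) (ζd t + ξ) (ζd' t) :=
      hgc.hasDerivWithinAt.derivWithin (hud t ht)
    have bV2 : ‖fderiv ℝ (gradient (Wtilde F)) (ζd t + ξ) (ζd' t)‖ ≤ ψ₄ A * Λ₃ :=
      ((fderiv ℝ (gradient (Wtilde F)) (ζd t + ξ)).le_opNorm _).trans
        (mul_le_mul hψ₄app (hζ'b t ht) (norm_nonneg _) (hψ₄nn _ hA0))
    -- term 3
    have egr2 : (fun y => gradient (fun y' => Wtilde F (ζd t + y')) y)
        = fun y => gradient (Wtilde F) (ζd t + y) :=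
      funext fun y => gradient_shift _ _ _ (hWd _)
    have e5 : fderiv ℝ (fun y => gradient (Wtilde F) (ζd t + y)) ξ
        = fderiv ℝ (gradient (Wtilde F)) (ζd t + ξ) :=
      fderiv_shift _ _ _ (diff_grad _ _ (hWd2 _))
    rw [e2, e3, egr, e4, egr2, e5]
    have hsl : 0 ≤ s * L s := mul_nonneg hs (hLpos s).le
    have c2 : 2 * s * L s * ‖fderiv ℝ (gradient (Wtilde F)) (ζd t + ξ) (ζd' t)‖
        ≤ 2 * s * L s * (ψ₄ A * Λ₃) :=
      mul_le_mul_of_nonneg_left bV2 (by nlinarith)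
    have c3 : s ^ 2 * L s ^ 2 * ‖fderiv ℝ (gradient (Wtilde F)) (ζd t + ξ)‖
        ≤ s ^ 2 * L s ^ 2 * ψ₄ A :=
      mul_le_mul_of_nonneg_left hψ₄app (by positivity)
    rw [hP, ← hAdef]
    nlinarith [sq_nonneg (ψ₃ s),
      sq_nonneg (2 * Λ₃ * ψ₁ s + 2 * Λ₂ * Λ₃ * ψ₂ s + (Λ₄ + Λ₃) * s * ψ₂ s),
      hψ₄nn _ (hAs s hs)]
  · -- part (ii)
    intro t ht x
    rw [gradient_shift (Wtilde F) (ζd t) x (hWd _)]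
    have hx0 : (0:ℝ) ≤ ‖x‖ := norm_nonneg x
    have hb : ‖gradient (Wtilde F) (ζd t + x)‖ ≤ ψ₃ ‖x‖ :=
      hψ₃ ‖x‖ hx0 _ ((norm_add_le _ _).trans (by have := hζb t ht; linarith))
    exact hb.trans (hsqrtP _ _ (hψ₃nn _ hx0) (hPsq ‖x‖ hx0).2)
  · -- part (iii)
    intro t ht s' hs' x u
    set s := ‖x‖ + |u| with hsdef
    have hs0 : (0:ℝ) ≤ s := by positivity
    have hxs : ‖x‖ ≤ s := by simp [hsdef, abs_nonneg]
    have hus : |u| ≤ s := by simp [hsdef, norm_nonneg]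
    have hψ1s := hψ₁nn s hs0
    have hψ2s := hψ₂nn s hs0
    have hΛ₃' : ∀ r, t ≤ r → r ≤ s' → ‖ζd' r‖ ≤ Λ₃ := fun r h1 _ => hζ'b r (le_trans ht h1)
    -- the time-derivative bound
    set B := 2 * Λ₃ * ψ₁ s + 2 * Λ₂ * Λ₃ * ψ₂ s + (Λ₄ + Λ₃) * s * ψ₂ s with hBdef
    set D : ℝ → ℝ := fun r =>
      fderiv ℝ (g1f F H) (ζd r + x) (ζd' r) - fderiv ℝ (g1f F H) (ζd r) (ζd' r)
      + ((fderiv ℝ (g2f G) (ζd r + x) (ζd' r) - fderiv ℝ (g2f G) (ζd r) (ζd' r)) * v_d (r - τ)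
        + (g2f G (ζd r + x) - g2f G (ζd r)) * (vd' (r - τ) * 1))
      + fderiv ℝ (g2f G) (ζd r + x) (ζd' r) * u with hDdef
    have hder : ∀ r ∈ Icc t s', HasDerivWithinAt (fun r => ftil r x + gtil r x * u)
        (D r) (Icc t s') r := by
      intro r hr
      have hr0 : (0:ℝ) ≤ r := le_trans ht hr.1
      have hζr := (hζdD r hr0).1
      have hc1 : HasDerivAt (fun r => g1f F H (ζd r + x))
          (fderiv ℝ (g1f F H) (ζd r + x) (ζd' r)) r :=
        (hg1d _).hasFDerivAt.comp_hasDerivAt r (hζr.add_const x)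
      have hc2 : HasDerivAt (fun r => g1f F H (ζd r))
          (fderiv ℝ (g1f F H) (ζd r) (ζd' r)) r :=
        (hg1d _).hasFDerivAt.comp_hasDerivAt r hζr
      have hc3 : HasDerivAt (fun r => g2f G (ζd r + x))
          (fderiv ℝ (g2f G) (ζd r + x) (ζd' r)) r :=
        (hg2d _).hasFDerivAt.comp_hasDerivAt r (hζr.add_const x)
      have hc4 : HasDerivAt (fun r => g2f G (ζd r))
          (fderiv ℝ (g2f G) (ζd r) (ζd' r)) r :=
        (hg2d _).hasFDerivAt.comp_hasDerivAt r hζr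
      have hv : HasDerivAt (fun r => v_d (r - τ)) (vd' (r - τ) * 1) r :=
        (hvdD (r - τ) (by linarith)).comp r ((hasDerivAt_id r).sub_const τ)
      have hh : HasDerivAt (fun r => ftil r x + gtil r x * u) (D r) r := by
        simp only [hftil, hgtil, hDdef]
        exact ((hc1.sub hc2).add ((hc3.sub hc4).mul hv)).add (hc3.mul_const u)
      exact hh.hasDerivWithinAt
    have hbound : ∀ r ∈ Icc t s', ‖D r‖ ≤ B := by
      intro r hr
      have hr0 : (0:ℝ) ≤ r := le_trans ht hr.1
      have hζn : ‖ζd r‖ ≤ Λ₁ + s := le_trans (hζb r hr0) (by linarith)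
      have hζxn : ‖ζd r + x‖ ≤ Λ₁ + s :=
        (norm_add_le _ _).trans (by have := hζb r hr0; linarith)
      have hζ'n : ‖ζd' r‖ ≤ Λ₃ := hζ'b r hr0
      have eA1 : |fderiv ℝ (g1f F H) (ζd r + x) (ζd' r)| ≤ ψ₁ s * Λ₃ :=
        (fderiv_apply_le_grad _ _ _).trans
          (mul_le_mul (hψ₁ s hs0 _ hζxn) hζ'n (norm_nonneg _) hψ1s)
      have eA2 : |fderiv ℝ (g1f F H) (ζd r) (ζd' r)| ≤ ψ₁ s * Λ₃ :=
        (fderiv_apply_le_grad _ _ _).trans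
          (mul_le_mul (hψ₁ s hs0 _ hζn) hζ'n (norm_nonneg _) hψ1s)
      have eB1 : |fderiv ℝ (g2f G) (ζd r + x) (ζd' r)| ≤ ψ₂ s * Λ₃ :=
        (fderiv_apply_le_grad _ _ _).trans
          (mul_le_mul (hψ₂ s hs0 _ hζxn) hζ'n (norm_nonneg _) hψ2s)
      have eB2 : |fderiv ℝ (g2f G) (ζd r) (ζd' r)| ≤ ψ₂ s * Λ₃ :=
        (fderiv_apply_le_grad _ _ _).trans
          (mul_le_mul (hψ₂ s hs0 _ hζn) hζ'n (norm_nonneg _) hψ2s)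
      have egd : |g2f G (ζd r + x) - g2f G (ζd r)| ≤ ψ₂ s * s := by
        have hmvt : ‖g2f G (ζd r + x) - g2f G (ζd r)‖ ≤ ψ₂ s * ‖(ζd r + x) - ζd r‖ := by
          apply (convex_closedBall (0 : EuclideanSpace ℝ (Fin 2)) (Λ₁ + s)).norm_image_sub_le_of_norm_fderiv_le
            (fun y _ => hg2d y)
            (fun y hy => by
              rw [← norm_gradient_eq]
              exact hψ₂ s hs0 y (by simpa [mem_closedBall_zero_iff] using hy))
            (by simpa [mem_closedBall_zero_iff] using hζn)
            (by simpa [mem_closedBall_zero_iff] using hζxn)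
        have hxx : (ζd r + x) - ζd r = x := by abel
        rw [hxx] at hmvt
        rw [Real.norm_eq_abs] at hmvt
        exact hmvt.trans (mul_le_mul_of_nonneg_left hxs hψ2s)
      have ev : |v_d (r - τ)| ≤ Λ₂ := hvb _ (by linarith)
      have ev' : |vd' (r - τ)| ≤ Λ₄ := hv'b _ (by linarith)
      rw [Real.norm_eq_abs, hDdef]
      have t0 : |fderiv ℝ (g1f F H) (ζd r + x) (ζd' r) - fderiv ℝ (g1f F H) (ζd r) (ζd' r)
          + ((fderiv ℝ (g2f G) (ζd r + x) (ζd' r) - fderiv ℝ (g2f G) (ζd r) (ζd' r)) * v_d (r - τ)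
            + (g2f G (ζd r + x) - g2f G (ζd r)) * (vd' (r - τ) * 1))
          + fderiv ℝ (g2f G) (ζd r + x) (ζd' r) * u|
          ≤ |fderiv ℝ (g1f F H) (ζd r + x) (ζd' r)| + |fderiv ℝ (g1f F H) (ζd r) (ζd' r)|
            + (|fderiv ℝ (g2f G) (ζd r + x) (ζd' r)| + |fderiv ℝ (g2f G) (ζd r) (ζd' r)|) * |v_d (r - τ)|
            + |g2f G (ζd r + x) - g2f G (ζd r)| * |vd' (r - τ)|
            + |fderiv ℝ (g2f G) (ζd r + x) (ζd' r)| * |u| := by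
        have u1 := abs_add_le (fderiv ℝ (g1f F H) (ζd r + x) (ζd' r) - fderiv ℝ (g1f F H) (ζd r) (ζd' r)
          + ((fderiv ℝ (g2f G) (ζd r + x) (ζd' r) - fderiv ℝ (g2f G) (ζd r) (ζd' r)) * v_d (r - τ)
            + (g2f G (ζd r + x) - g2f G (ζd r)) * (vd' (r - τ) * 1)))
          (fderiv ℝ (g2f G) (ζd r + x) (ζd' r) * u)
        have u2 := abs_add_le (fderiv ℝ (g1f F H) (ζd r + x) (ζd' r) - fderiv ℝ (g1f F H) (ζd r) (ζd' r))
          ((fderiv ℝ (g2f G) (ζd r + x) (ζd' r) - fderiv ℝ (g2f G) (ζd r) (ζd' r)) * v_d (r - τ)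
            + (g2f G (ζd r + x) - g2f G (ζd r)) * (vd' (r - τ) * 1))
        have u3 := abs_sub (fderiv ℝ (g1f F H) (ζd r + x) (ζd' r)) (fderiv ℝ (g1f F H) (ζd r) (ζd' r))
        have u4 := abs_add_le ((fderiv ℝ (g2f G) (ζd r + x) (ζd' r) - fderiv ℝ (g2f G) (ζd r) (ζd' r)) * v_d (r - τ))
          ((g2f G (ζd r + x) - g2f G (ζd r)) * (vd' (r - τ) * 1))
        have u5 : |(fderiv ℝ (g2f G) (ζd r + x) (ζd' r) - fderiv ℝ (g2f G) (ζd r) (ζd' r)) * v_d (r - τ)|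
            ≤ (|fderiv ℝ (g2f G) (ζd r + x) (ζd' r)| + |fderiv ℝ (g2f G) (ζd r) (ζd' r)|) * |v_d (r - τ)| := by
          rw [abs_mul]
          exact mul_le_mul_of_nonneg_right (abs_sub _ _) (abs_nonneg _)
        have u6 : |(g2f G (ζd r + x) - g2f G (ζd r)) * (vd' (r - τ) * 1)|
            = |g2f G (ζd r + x) - g2f G (ζd r)| * |vd' (r - τ)| := by
          rw [abs_mul, mul_one]
        have u7 : |fderiv ℝ (g2f G) (ζd r + x) (ζd' r) * u|
            = |fderiv ℝ (g2f G) (ζd r + x) (ζd' r)| * |u| := abs_mul _ _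
        linarith
      refine t0.trans ?_
      have m1 : (|fderiv ℝ (g2f G) (ζd r + x) (ζd' r)| + |fderiv ℝ (g2f G) (ζd r) (ζd' r)|) * |v_d (r - τ)|
          ≤ (ψ₂ s * Λ₃ + ψ₂ s * Λ₃) * Λ₂ :=
        mul_le_mul (by linarith) ev (abs_nonneg _)
          (by nlinarith [mul_nonneg hψ2s hΛ₃0])
      have m2 : |g2f G (ζd r + x) - g2f G (ζd r)| * |vd' (r - τ)| ≤ ψ₂ s * s * Λ₄ :=
        mul_le_mul egd ev' (abs_nonneg _) (by nlinarith [mul_nonneg hψ2s hs0])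
      have m3 : |fderiv ℝ (g2f G) (ζd r + x) (ζd' r)| * |u| ≤ ψ₂ s * Λ₃ * s :=
        mul_le_mul eB1 hus (abs_nonneg _) (mul_nonneg hψ2s hΛ₃0)
      rw [hBdef]; nlinarith
    have hmvt2 : ‖(fun r => ftil r x + gtil r x * u) s' - (fun r => ftil r x + gtil r x * u) t‖
        ≤ B * ‖s' - t‖ :=
      (convex_Icc t s').norm_image_sub_le_of_norm_hasDerivWithin_le hder hbound
        ⟨le_rfl, hs'⟩ ⟨hs', le_rfl⟩
    have hnorm_eq : ‖f s' x u - f t x u‖ = |(ftil s' x + gtil s' x * u) - (ftil t x + gtil t x * u)| := by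
      rw [hfdef, hfdef, vec2_sub_norm]
    rw [hnorm_eq]
    have hst : ‖s' - t‖ = s' - t := by
      rw [Real.norm_eq_abs, abs_of_nonneg (by linarith)]
    rw [Real.norm_eq_abs] at hmvt2
    have hBP : B ≤ Real.sqrt (P s) := hsqrtP _ _ (hBr s hs0) (hPsq s hs0).1
    calc |(ftil s' x + gtil s' x * u) - (ftil t x + gtil t x * u)|
        ≤ B * ‖s' - t‖ := hmvt2
      _ = B * (s' - t) := by rw [hst]
      _ ≤ Real.sqrt (P s) * (s' - t) := mul_le_mul_of_nonneg_right hBP (by linarith)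
      _ = (s' - t) * Real.sqrt (P s) := mul_comm _ _
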